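/- The Büchi automaton D₄ is deterministic, has 4 states, and recognises L_BKKS, i.e., L(D₄) = L_BKKS. -/

import Mathlib

/-- A (nondeterministic) Büchi/coBüchi automaton: an initial state, a set of
transitions, and a subset of *significant* transitions. -/
structure BuchiAutomaton (σ : Type) (Q : Type) where
  init : Q
  trans : Set (Q × σ × Q)
  sig : Set (Q × σ × Q)
  sig_sub : sig ⊆ trans

namespace BuchiAutomaton

variable {σ Q : Type}

/-- `ρ` is a run of `A` on the infinite word `w`, starting at the state `p`. -/
def IsRunFrom (A : BuchiAutomaton σ Q) (p : Q) (w : ℕ → σ) (ρ : ℕ → Q) : Prop :=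
  ρ 0 = p ∧ ∀ i, (ρ i, w i, ρ (i + 1)) ∈ A.trans

/-- Büchi acceptance: the run contains infinitely many significant transitions. -/
def BuchiAcc (A : BuchiAutomaton σ Q) (w : ℕ → σ) (ρ : ℕ → Q) : Prop :=
  ∀ N, ∃ i, N ≤ i ∧ (ρ i, w i, ρ (i + 1)) ∈ A.sig

/-- coBüchi acceptance: the run contains finitely many significant transitions. -/
def CoBuchiAcc (A : BuchiAutomaton σ Q) (w : ℕ → σ) (ρ : ℕ → Q) : Prop :=
  ∃ N, ∀ i, N ≤ i → (ρ i, w i, ρ (i + 1)) ∉ A.sig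

/-- The language of `A` (as a Büchi automaton), with initial state `p`. -/
def LangFrom (A : BuchiAutomaton σ Q) (p : Q) : Set (ℕ → σ) :=
  {w | ∃ ρ, A.IsRunFrom p w ρ ∧ A.BuchiAcc w ρ}

/-- The language of `A`, read as a Büchi automaton. -/
def Lang (A : BuchiAutomaton σ Q) : Set (ℕ → σ) :=
  A.LangFrom A.init

/-- The language of `A`, read as a coBüchi automaton. -/
def CoLang (A : BuchiAutomaton σ Q) : Set (ℕ → σ) :=
  {w | ∃ ρ, A.IsRunFrom A.init w ρ ∧ A.CoBuchiAcc w ρ}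

/-- `A` is deterministic: at most one outgoing transition per state and letter. -/
def Deterministic (A : BuchiAutomaton σ Q) : Prop :=
  ∀ p a q q', (p, a, q) ∈ A.trans → (p, a, q') ∈ A.trans → q = q'

/-- `FinRun A l p`: `l` is a finite run of `A` from the initial state, ending in
the state `p` (represented as the chronological list of its transitions). -/
inductive FinRun (A : BuchiAutomaton σ Q) : List (Q × σ × Q) → Q → Prop
  | nil : FinRun A [] A.init
  | snoc {l : List (Q × σ × Q)} {p : Q} {a : σ} {q : Q} :
      FinRun A l p → (p, a, q) ∈ A.trans → FinRun A (l ++ [(p, a, q)]) q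

/-- A resolver for `A`: a function from finite runs and letters to transitions,
such that on every finite run from the initial state ending in a state `p` and
every letter `a`, it outputs a transition on `a` with source `p`. -/
structure Resolver (A : BuchiAutomaton σ Q) where
  res : List (Q × σ × Q) → σ → Q × σ × Q
  res_valid : ∀ l p a, A.FinRun l p →
    (res l a).1 = p ∧ (res l a).2.1 = a ∧ res l a ∈ A.trans

/-- The history (finite run) built by a resolver after reading `n` letters of `w`. -/
def Resolver.hist {A : BuchiAutomaton σ Q} (r : Resolver A) (w : ℕ → σ) : ℕ → List (Q × σ × Q)
  | 0 => []
  | n + 1 => r.hist w n ++ [r.res (r.hist w n) (w n)]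

/-- The run induced by the resolver on `w` satisfies the Büchi condition. -/
def Resolver.InducedBuchiAcc {A : BuchiAutomaton σ Q} (r : Resolver A) (w : ℕ → σ) : Prop :=
  ∀ N, ∃ n, N ≤ n ∧ r.res (r.hist w n) (w n) ∈ A.sig

/-- The run induced by the resolver on `w` satisfies the coBüchi condition. -/
def Resolver.InducedCoBuchiAcc {A : BuchiAutomaton σ Q} (r : Resolver A) (w : ℕ → σ) : Prop :=
  ∃ N, ∀ n, N ≤ n → r.res (r.hist w n) (w n) ∉ A.sig

/-- `A` is history-deterministic (as a Büchi automaton). -/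
def HistoryDeterministic (A : BuchiAutomaton σ Q) : Prop :=
  ∃ r : Resolver A, ∀ w ∈ A.Lang, r.InducedBuchiAcc w

/-- `A` is history-deterministic (as a coBüchi automaton). -/
def CoHistoryDeterministic (A : BuchiAutomaton σ Q) : Prop :=
  ∃ r : Resolver A, ∀ w ∈ A.CoLang, r.InducedCoBuchiAcc w

end BuchiAutomaton

/-- The alphabet `{x, a, b}`. -/
inductive XAB : Type
  | x | a | b
deriving DecidableEq

open XAB in
/-- `L_BKKS`: the infinite words of the form `(xa + xb)^ω` containing
infinitely many occurrences of the infix `xaxa` or infinitely many occurrences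
of the infix `xbxb`. -/
def L_BKKS : Set (ℕ → XAB) :=
  {w | (∀ n, w (2 * n) = x ∧ (w (2 * n + 1) = a ∨ w (2 * n + 1) = b)) ∧
    ((∀ N, ∃ i, N ≤ i ∧ w i = x ∧ w (i + 1) = a ∧ w (i + 2) = x ∧ w (i + 3) = a) ∨
     (∀ N, ∃ i, N ≤ i ∧ w i = x ∧ w (i + 1) = b ∧ w (i + 2) = x ∧ w (i + 3) = b))}

/-- The states of the automaton `D₄`. -/
inductive DSt : Type
  | pa | pb | pa' | pb'
deriving DecidableEq

instance : Fintype DSt :=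
  ⟨{DSt.pa, DSt.pb, DSt.pa', DSt.pb'}, fun x => by cases x <;> simp⟩

open XAB DSt in
/-- The Büchi automaton `D₄`. -/
def D4 : BuchiAutomaton XAB DSt where
  init := pa
  trans := ({(pa', a, pa), (pb', b, pb)} : Set (DSt × XAB × DSt)) ∪
    ({(pa, x, pa'), (pb, x, pb'), (pa', b, pb), (pb', a, pa)} : Set (DSt × XAB × DSt))
  sig := {(pa', a, pa), (pb', b, pb)}
  sig_sub := Set.subset_union_left


section Aux
open XAB DSt

/-- Deterministic transition function of `D₄`. -/
def dstep : DSt → XAB → DSt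
  | .pa, _ => .pa'
  | .pb, _ => .pb'
  | .pa', .a => .pa
  | .pa', _ => .pb
  | .pb', .a => .pa
  | .pb', _ => .pb

/-- The canonical run of `D₄` on a word. -/
def runOf (w : ℕ → XAB) : ℕ → DSt
  | 0 => .pa
  | n + 1 => dstep (runOf w n) (w n)

lemma runOf_at (w : ℕ → XAB) {m k : ℕ} (h : m = k + 1) :
    runOf w m = dstep (runOf w k) (w k) := by subst h; rfl

lemma mem_trans_iff {p : DSt} {c : XAB} {q : DSt} :
    (p, c, q) ∈ D4.trans ↔
      (p = pa' ∧ c = a ∧ q = pa) ∨ (p = pb' ∧ c = b ∧ q = pb) ∨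
      (p = pa ∧ c = x ∧ q = pa') ∨ (p = pb ∧ c = x ∧ q = pb') ∨
      (p = pa' ∧ c = b ∧ q = pb) ∨ (p = pb' ∧ c = a ∧ q = pa) := by
  simp only [D4, Set.mem_union, Set.mem_insert_iff, Set.mem_singleton_iff, Prod.mk.injEq]
  tauto

lemma mem_sig_iff {p : DSt} {c : XAB} {q : DSt} :
    (p, c, q) ∈ D4.sig ↔
      (p = pa' ∧ c = a ∧ q = pa) ∨ (p = pb' ∧ c = b ∧ q = pb) := by
  simp only [D4, Set.mem_insert_iff, Set.mem_singleton_iff, Prod.mk.injEq]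

lemma runOf_even (w : ℕ → XAB) : ∀ n, runOf w (2*n) = pa ∨ runOf w (2*n) = pb := by
  intro n
  induction n with
  | zero => left; rfl
  | succ n ih =>
    have e : 2*(n+1) = (2*n+1) + 1 := by ring
    rw [e, runOf_at w rfl, runOf_at w rfl]
    rcases ih with h | h <;> rw [h] <;>
      cases w (2*n) <;> cases w (2*n+1) <;> simp [dstep]

lemma forward_step (w : ℕ → XAB) (ρ : ℕ → DSt)
    (ht : ∀ i, (ρ i, w i, ρ (i+1)) ∈ D4.trans) (k : ℕ)
    (heven : ρ k = pa ∨ ρ k = pb) :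
    w k = x ∧ ((ρ (k+1) = pa' ∧ ρ k = pa) ∨ (ρ (k+1) = pb' ∧ ρ k = pb)) ∧
      ((w (k+1) = a ∧ ρ (k+2) = pa) ∨ (w (k+1) = b ∧ ρ (k+2) = pb)) := by
  have h1 := mem_trans_iff.mp (ht k)
  have h2 := mem_trans_iff.mp (ht (k+1))
  have e : k + 1 + 1 = k + 2 := by omega
  rw [e] at h2
  rcases heven with h | h <;> rw [h] at h1 <;> simp only [reduceCtorEq, false_and,
    true_and, false_or, or_false] at h1 <;>
  · obtain ⟨hx, hp⟩ := h1
    rw [hp] at h2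
    simp only [reduceCtorEq, false_and, true_and, false_or, or_false] at h2
    refine ⟨hx, ?_, ?_⟩ <;> tauto

lemma forward_even (w : ℕ → XAB) (ρ : ℕ → DSt) (h0 : ρ 0 = pa)
    (ht : ∀ i, (ρ i, w i, ρ (i+1)) ∈ D4.trans) :
    ∀ n, ρ (2*n) = pa ∨ ρ (2*n) = pb := by
  intro n
  induction n with
  | zero => left; simpa using h0
  | succ n ih =>
    have h := (forward_step w ρ ht (2*n) ih).2.2
    have e : 2*(n+1) = 2*n + 2 := by ring
    rw [e]
    rcases h with ⟨_, h⟩ | ⟨_, h⟩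
    exacts [Or.inl h, Or.inr h]

end Aux

/-- `D₄` is deterministic, has 4 states, and recognises `L_BKKS`. -/
theorem D4_deterministic_card_lang :
    D4.Deterministic ∧ Fintype.card DSt = 4 ∧ D4.Lang = L_BKKS := by
  refine ⟨?_, by decide, ?_⟩
  · intro p c q q' h h'
    rw [mem_trans_iff] at h h'
    rcases h with ⟨h1,h2,h3⟩|⟨h1,h2,h3⟩|⟨h1,h2,h3⟩|⟨h1,h2,h3⟩|⟨h1,h2,h3⟩|⟨h1,h2,h3⟩ <;>
      rcases h' with ⟨g1,g2,g3⟩|⟨g1,g2,g3⟩|⟨g1,g2,g3⟩|⟨g1,g2,g3⟩|⟨g1,g2,g3⟩|⟨g1,g2,g3⟩ <;>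
      subst_vars <;> simp_all
  · ext w
    constructor
    · -- forward
      rintro ⟨ρ, ⟨h0, ht⟩, hacc⟩
      have h0' : ρ 0 = DSt.pa := h0
      have heven := forward_even w ρ h0' ht
      have hkey : ∀ N, ∃ i, N ≤ i ∧
          ((w i = XAB.x ∧ w (i+1) = XAB.a ∧ w (i+2) = XAB.x ∧ w (i+3) = XAB.a) ∨
           (w i = XAB.x ∧ w (i+1) = XAB.b ∧ w (i+2) = XAB.x ∧ w (i+3) = XAB.b)) := by
        intro N
        obtain ⟨i, hNi, hsig⟩ := hacc (2*N+3)
        have hs := mem_sig_iff.mp hsig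
        rcases Nat.even_or_odd i with ⟨n, hn⟩ | ⟨n, hn⟩
        · exfalso
          have e : i = 2*n := by omega
          rcases heven n with h | h <;> rcases hs with ⟨h', _⟩ | ⟨h', _⟩ <;>
            rw [e, h] at h' <;> simp at h'
        · have hn' : i = 2*n + 1 := hn
          obtain ⟨m, rfl⟩ : ∃ m, n = m + 1 := ⟨n - 1, by omega⟩
          have hm := forward_step w ρ ht (2*m) (heven m)
          have hm1 := forward_step w ρ ht (2*(m+1)) (heven (m+1))
          have e2 : 2*(m+1) = 2*m + 2 := by ring
          have e3 : 2*(m+1) + 1 = 2*m + 3 := by ring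
          rcases hs with ⟨hp, hwa, _⟩ | ⟨hp, hwb, _⟩
          · refine ⟨2*m, by omega, Or.inl ?_⟩
            rw [hn'] at hp hwa
            have hpa : ρ (2*(m+1)) = DSt.pa := by
              rcases hm1.2.1 with ⟨h1, h2⟩ | ⟨h1, h2⟩
              · exact h2
              · rw [h1] at hp; simp at hp
            rw [e2] at hpa
            have hw1 : w (2*m+1) = XAB.a := by
              rcases hm.2.2 with ⟨h1, _⟩ | ⟨h1, h2⟩
              · exact h1
              · rw [h2] at hpa; simp at hpa
            have hx2 : w (2*m+2) = XAB.x := by have := hm1.1; rwa [e2] at this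
            have hw3 : w (2*m+3) = XAB.a := by rwa [e3] at hwa
            exact ⟨hm.1, hw1, hx2, hw3⟩
          · refine ⟨2*m, by omega, Or.inr ?_⟩
            rw [hn'] at hp hwb
            have hpb : ρ (2*(m+1)) = DSt.pb := by
              rcases hm1.2.1 with ⟨h1, h2⟩ | ⟨h1, h2⟩
              · rw [h1] at hp; simp at hp
              · exact h2
            rw [e2] at hpb
            have hw1 : w (2*m+1) = XAB.b := by
              rcases hm.2.2 with ⟨h1, h2⟩ | ⟨h1, _⟩
              · rw [h2] at hpb; simp at hpb
              · exact h1
            have hx2 : w (2*m+2) = XAB.x := by have := hm1.1; rwa [e2] at this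
            have hw3 : w (2*m+3) = XAB.b := by rwa [e3] at hwb
            exact ⟨hm.1, hw1, hx2, hw3⟩
      constructor
      · intro n
        have h := forward_step w ρ ht (2*n) (heven n)
        refine ⟨h.1, ?_⟩
        rcases h.2.2 with ⟨h1, _⟩ | ⟨h1, _⟩
        exacts [Or.inl h1, Or.inr h1]
      · by_contra hc
        push_neg at hc
        obtain ⟨⟨N1, h1⟩, N2, h2⟩ := hc
        obtain ⟨i, hi, hab⟩ := hkey (max N1 N2)
        rcases hab with ⟨e1, e2, e3, e4⟩ | ⟨e1, e2, e3, e4⟩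
        · exact h1 i (le_trans (le_max_left _ _) hi) e1 e2 e3 e4
        · exact h2 i (le_trans (le_max_right _ _) hi) e1 e2 e3 e4
    · -- backward
      rintro ⟨hshape, hinf⟩
      refine ⟨runOf w, ⟨rfl, ?_⟩, ?_⟩
      · intro i
        rcases Nat.even_or_odd i with ⟨n, hn⟩ | ⟨n, hn⟩
        · obtain rfl : i = 2*n := by omega
          have hx := (hshape n).1
          rw [mem_trans_iff, runOf_at w rfl]
          rcases runOf_even w n with h | h <;> rw [h, hx] <;> simp [dstep]
        · obtain rfl : i = 2*n + 1 := hn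
          have hx := (hshape n).1
          rw [mem_trans_iff, runOf_at w (rfl : 2*n+1+1 = (2*n+1)+1), runOf_at w rfl]
          rcases runOf_even w n with h | h <;> rcases (hshape n).2 with h2 | h2 <;>
            rw [h, hx, h2] <;> simp [dstep]
      · intro N
        rcases hinf with hA | hB
        · obtain ⟨i, hNi, e1, e2, e3, e4⟩ := hA N
          obtain ⟨n, rfl⟩ : ∃ n, i = 2*n := by
            rcases Nat.even_or_odd i with ⟨n, hn⟩ | ⟨n, hn⟩
            · exact ⟨n, by omega⟩
            · exfalso
              obtain rfl : i = 2*n+1 := hn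
              rcases (hshape n).2 with h | h <;> rw [e1] at h <;> simp at h
          refine ⟨2*n+3, by omega, ?_⟩
          have s1 : runOf w (2*n+1) = dstep (runOf w (2*n)) (w (2*n)) := runOf_at w rfl
          have s2 : runOf w (2*n+2) = dstep (runOf w (2*n+1)) (w (2*n+1)) :=
            runOf_at w (by omega)
          have s3 : runOf w (2*n+3) = dstep (runOf w (2*n+2)) (w (2*n+2)) :=
            runOf_at w (by omega)
          have s4 : runOf w (2*n+3+1) = dstep (runOf w (2*n+3)) (w (2*n+3)) :=
            runOf_at w rfl
          have c1 : runOf w (2*n+2) = DSt.pa := by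
            rcases runOf_even w n with h | h <;>
              rw [s2, s1, h, (hshape n).1, e2] <;> rfl
          have c2 : runOf w (2*n+3) = DSt.pa' := by rw [s3, c1, e3]; rfl
          have c3 : runOf w (2*n+3+1) = DSt.pa := by rw [s4, c2, e4]; rfl
          rw [mem_sig_iff]
          exact Or.inl ⟨c2, e4, c3⟩
        · obtain ⟨i, hNi, e1, e2, e3, e4⟩ := hB N
          obtain ⟨n, rfl⟩ : ∃ n, i = 2*n := by
            rcases Nat.even_or_odd i with ⟨n, hn⟩ | ⟨n, hn⟩
            · exact ⟨n, by omega⟩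
            · exfalso
              obtain rfl : i = 2*n+1 := hn
              rcases (hshape n).2 with h | h <;> rw [e1] at h <;> simp at h
          refine ⟨2*n+3, by omega, ?_⟩
          have s1 : runOf w (2*n+1) = dstep (runOf w (2*n)) (w (2*n)) := runOf_at w rfl
          have s2 : runOf w (2*n+2) = dstep (runOf w (2*n+1)) (w (2*n+1)) :=
            runOf_at w (by omega)
          have s3 : runOf w (2*n+3) = dstep (runOf w (2*n+2)) (w (2*n+2)) :=
            runOf_at w (by omega)
          have s4 : runOf w (2*n+3+1) = dstep (runOf w (2*n+3)) (w (2*n+3)) :=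
            runOf_at w rfl
          have c1 : runOf w (2*n+2) = DSt.pb := by
            rcases runOf_even w n with h | h <;>
              rw [s2, s1, h, (hshape n).1, e2] <;> rfl
          have c2 : runOf w (2*n+3) = DSt.pb' := by rw [s3, c1, e3]; rfl
          have c3 : runOf w (2*n+3+1) = DSt.pb := by rw [s4, c2, e4]; rfl
          rw [mem_sig_iff]
          exact Or.inr ⟨c2, e4, c3⟩
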